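/- For every real λ with 0 ≤ λ ≤ 1 and every real x with |x| ≤ π, one has |1 + λ(e^{ix} − 1)| = (1 − 2λ(1−λ)(1 − cos x))^{1/2} ≤ exp(−(1/2)·λ(1−λ)·x² + (1/24)·λ(1−λ)·x⁴). -/

import Mathlib

lemma sin_ge_sub_cube' (x : ℝ) (hx : 0 ≤ x) : x - x ^ 3 / 6 ≤ Real.sin x := by
  have hmono : MonotoneOn (fun y : ℝ => Real.sin y - y + y ^ 3 / 6) (Set.Ici 0) := by
    apply monotoneOn_of_deriv_nonneg (convex_Ici 0)
    · exact (Real.continuous_sin.sub continuous_id).add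
        ((continuous_pow 3).div_const 6) |>.continuousOn
    · intro y hy
      exact ((Real.differentiable_sin.sub differentiable_id).add
        ((differentiable_pow 3).div_const 6)).differentiableAt.differentiableWithinAt
    · intro y hy
      have h1 := ((Real.hasDerivAt_sin y).sub (hasDerivAt_id y)).add
        ((hasDerivAt_pow 3 y).div_const 6)
      have h1' : HasDerivAt (fun y : ℝ => Real.sin y - y + y ^ 3 / 6)
          (Real.cos y - 1 + y ^ 2 / 2) y := by
        refine h1.congr_deriv ?_
        push_cast; ring
      rw [h1'.deriv]
      nlinarith [Real.one_sub_sq_div_two_le_cos (x := y)]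
  have := hmono (Set.self_mem_Ici) (Set.mem_Ici.mpr hx) hx
  simp at this
  nlinarith [this]

lemma cos_le_quartic (x : ℝ) : Real.cos x ≤ 1 - x ^ 2 / 2 + x ^ 4 / 24 := by
  wlog hx : 0 ≤ x with H
  · have := H (-x) (by linarith)
    simp at this
    linarith [this]
  have hmono : MonotoneOn (fun y : ℝ => 1 - y ^ 2 / 2 + y ^ 4 / 24 - Real.cos y)
      (Set.Ici 0) := by
    apply monotoneOn_of_deriv_nonneg (convex_Ici 0)
    · fun_prop
    · intro y hy
      apply DifferentiableAt.differentiableWithinAt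
      fun_prop
    · intro y hy
      have hy0 : 0 ≤ y := le_of_lt (by simpa using hy)
      have h1 := (((hasDerivAt_const y (1:ℝ)).sub ((hasDerivAt_pow 2 y).div_const 2)).add
        ((hasDerivAt_pow 4 y).div_const 24)).sub (Real.hasDerivAt_cos y)
      have h1' : HasDerivAt (fun y : ℝ => 1 - y ^ 2 / 2 + y ^ 4 / 24 - Real.cos y)
          (-y + y ^ 3 / 6 + Real.sin y) y := by
        refine h1.congr_deriv ?_
        push_cast; ring
      rw [h1'.deriv]
      nlinarith [sin_ge_sub_cube' y hy0]
  have := hmono (Set.self_mem_Ici) (Set.mem_Ici.mpr hx) hx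
  simp at this
  nlinarith [this]

theorem exp_estimate (lam x : ℝ) (h0 : 0 ≤ lam) (h1 : lam ≤ 1) (hx : |x| ≤ Real.pi) :
    ‖(1 + lam * (Complex.exp (x * Complex.I) - 1) : ℂ)‖ =
      Real.sqrt (1 - 2 * lam * (1 - lam) * (1 - Real.cos x)) ∧
    Real.sqrt (1 - 2 * lam * (1 - lam) * (1 - Real.cos x)) ≤
      Real.exp (-(1 / 2) * (lam * (1 - lam)) * x ^ 2 +
        (1 / 24) * (lam * (1 - lam)) * x ^ 4) := by
  have ht : 0 ≤ lam * (1 - lam) := mul_nonneg h0 (by linarith)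
  constructor
  · have hre : (1 + (lam : ℂ) * (Complex.exp (x * Complex.I) - 1)).re
        = 1 + lam * (Real.cos x - 1) := by
      simp [Complex.exp_ofReal_mul_I_re]
    have him : (1 + (lam : ℂ) * (Complex.exp (x * Complex.I) - 1)).im
        = lam * Real.sin x := by
      simp [Complex.exp_ofReal_mul_I_im]
    rw [Complex.norm_def, Complex.normSq_apply, hre, him]
    congr 1
    nlinarith [Real.sin_sq_add_cos_sq x]
  · set t := lam * (1 - lam) with htdef
    set E := -(1 / 2) * t * x ^ 2 + (1 / 24) * t * x ^ 4 with hE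
    have key : 1 - 2 * lam * (1 - lam) * (1 - Real.cos x) ≤ Real.exp (2 * E) := by
      have h2 : -(2 * t) * (1 - Real.cos x) ≤ 2 * E := by
        have hc := cos_le_quartic x
        have h3 : x ^ 2 / 2 - x ^ 4 / 24 ≤ 1 - Real.cos x := by linarith
        have h4 := mul_le_mul_of_nonneg_left h3 ht
        rw [hE]; nlinarith [h4]
      calc 1 - 2 * lam * (1 - lam) * (1 - Real.cos x)
          = 1 + (-(2 * t) * (1 - Real.cos x)) := by rw [htdef]; ring
        _ ≤ Real.exp (-(2 * t) * (1 - Real.cos x)) := by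
            have := Real.add_one_le_exp (-(2 * t) * (1 - Real.cos x)); linarith
        _ ≤ Real.exp (2 * E) := Real.exp_le_exp.mpr h2
    calc Real.sqrt (1 - 2 * lam * (1 - lam) * (1 - Real.cos x))
        ≤ Real.sqrt (Real.exp (2 * E)) := Real.sqrt_le_sqrt key
      _ = Real.exp E := by
          rw [show (2 : ℝ) * E = E + E by ring, Real.exp_add,
            Real.sqrt_mul_self (Real.exp_nonneg E)]
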